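/- For benchmark 2 with output y(t) = x₁(t), the observer ẑ₁(t+1) = 0.5·y(t)/(1+y(t)), ẑ₂(t+1) = 0.1·ẑ₂(t) + y(t)/(1+y(t)) satisfies: if x₂(t) ≡ x₂ is constant (as the dynamics enforce) and x(t), ẑ(t) evolve per the system and observer equations, then the error T₂(x(t)) − ẑ₂(t) satisfies e(t+1) = 0.1·e(t), and hence |T₂(x(t)) − ẑ₂(t)| = 0.1ᵗ·|T₂(x(0)) − ẑ₂(0)| → 0 geometrically. -/

import Mathlib

theorem benchmark2_error_geometric
    (x₁ : ℕ → ℝ) (x₂ : ℝ) (z₂ : ℕ → ℝ)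
    (hden : ∀ t, 1 + x₁ t ≠ 0 ∧ 1 - 0.5 * x₁ t / (1 + x₁ t) + 0.9 * x₂ ≠ 0)
    (hx : ∀ t, x₁ (t + 1) =
      (0.5 * x₁ t / (1 + x₁ t) - 0.9 * x₂) / (1 - 0.5 * x₁ t / (1 + x₁ t) + 0.9 * x₂))
    (hz : ∀ t, z₂ (t + 1) = 0.1 * z₂ t + x₁ t / (1 + x₁ t))
    (e : ℕ → ℝ)
    (he : ∀ t, e t = 2.5 * (x₁ t / (1 + x₁ t) + x₂) - z₂ t) :
    (∀ t, e (t + 1) = 0.1 * e t) ∧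
    (∀ t, |e t| = 0.1 ^ t * |e 0|) ∧
    Filter.Tendsto e Filter.atTop (nhds 0) := by
  have hstep : ∀ t, e (t + 1) = 0.1 * e t := by
    intro t
    obtain ⟨h1, h2⟩ := hden t
    have hxt := hx t
    rw [mul_div_assoc] at hxt h2
    set s := x₁ t / (1 + x₁ t) with hs
    have hden' : 1 + x₁ (t + 1) = 1 / (1 - 0.5 * s + 0.9 * x₂) := by
      rw [hxt]
      field_simp
      ring
    have hfrac : x₁ (t + 1) / (1 + x₁ (t + 1)) = 0.5 * s - 0.9 * x₂ := by
      rw [hden', hxt]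
      field_simp
    rw [he (t + 1), he t, hfrac, hz t, ← hs]
    ring
  have hpow : ∀ t, e t = 0.1 ^ t * e 0 := by
    intro t
    induction t with
    | zero => simp
    | succ n ih => rw [hstep n, ih]; ring
  refine ⟨hstep, fun t => by rw [hpow t, abs_mul, abs_pow, abs_of_pos]; norm_num, ?_⟩
  have h : Filter.Tendsto (fun t => (0.1 : ℝ) ^ t * e 0) Filter.atTop (nhds (0 * e 0)) :=
    (tendsto_pow_atTop_nhds_zero_of_lt_one (by norm_num) (by norm_num)).mul_const _
  rw [zero_mul] at h
  exact h.congr fun t => (hpow t).symm
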